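/- Let L : J → ℝ and X^i : J → ℝ (1 ≤ i ≤ n) be smooth. Then for all x ∈ ℝ^k, q ∈ ℝ^n, v ∈ (Fin n → Fin k → ℝ) and all w = (w^j_{αβ}) ∈ (Fin n → Fin k → Fin k → ℝ), the following identity holds, where every function and partial derivative is evaluated at (x,q,v) and T_α denotes the operator T_α(F) = ∂F/∂x^α + v^j_α ∂F/∂q^j + w^j_{αβ} ∂F/∂v^j_β: X^i ∂L/∂q^i + (∂X^i/∂x^α + v^j_α ∂X^i/∂q^j + w^j_{αβ} ∂X^i/∂v^j_β) ∂L/∂v^i_α = −∑_i (∑_α T_α(∂L/∂v^i_α) − ∂L/∂q^i) X^i + ∑_α T_α(X^i ∂L/∂v^i_α). (This is the identity d_{X^{(1)}}L = −(δL)^V(X∘π_{2,1}) + d_{T^{(1)}_α}[(Θ^α_L)^V(X)] in coordinates on the second jet space.) -/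

import Mathlib

open Function

noncomputable section

/-- The first jet space `J = ℝᵏ × ℝⁿ × (Fin n → Fin k → ℝ)`,
with coordinates `(xᵅ, qⁱ, vⁱ_α)`. -/
abbrev Jet (k n : ℕ) : Type :=
  (Fin k → ℝ) × (Fin n → ℝ) × (Fin n → Fin k → ℝ)

variable {k n : ℕ}

/-- Partial derivative `∂F/∂xᵅ` of a function on the jet space. -/
noncomputable def pdX (F : Jet k n → ℝ) (α : Fin k) (z : Jet k n) : ℝ :=
  deriv (fun t => F (Function.update z.1 α t, z.2.1, z.2.2)) (z.1 α)

/-- Partial derivative `∂F/∂qⁱ` of a function on the jet space. -/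
noncomputable def pdQ (F : Jet k n → ℝ) (i : Fin n) (z : Jet k n) : ℝ :=
  deriv (fun t => F (z.1, Function.update z.2.1 i t, z.2.2)) (z.2.1 i)

/-- Partial derivative `∂F/∂vⁱ_α` of a function on the jet space. -/
noncomputable def pdV (F : Jet k n → ℝ) (i : Fin n) (α : Fin k) (z : Jet k n) : ℝ :=
  deriv (fun t => F (z.1, z.2.1,
    Function.update z.2.2 i (Function.update (z.2.2 i) α t))) (z.2.2 i α)

/-- Partial derivative `∂φⁱ/∂xᵅ` of a map `φ : ℝᵏ → ℝⁿ`. -/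
noncomputable def pD (φ : (Fin k → ℝ) → (Fin n → ℝ)) (i : Fin n) (α : Fin k)
    (x : Fin k → ℝ) : ℝ :=
  deriv (fun t => φ (Function.update x α t) i) (x α)

/-- Second partial derivative `∂²φⁱ/∂xᵅ∂xᵝ` of a map `φ : ℝᵏ → ℝⁿ`. -/
noncomputable def pD2 (φ : (Fin k → ℝ) → (Fin n → ℝ)) (i : Fin n) (α β : Fin k)
    (x : Fin k → ℝ) : ℝ :=
  deriv (fun t => pD φ i β (Function.update x α t)) (x α)

/-- First prolongation `j¹φ : ℝᵏ → J` of `φ : ℝᵏ → ℝⁿ`. -/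
noncomputable def j1 (φ : (Fin k → ℝ) → (Fin n → ℝ)) (x : Fin k → ℝ) : Jet k n :=
  (x, φ x, fun i α => pD φ i α x)

/-- `φ` is a smooth solution of the Euler–Lagrange equations of the Lagrangian `L`:
`∑_α ∂/∂xᵅ[(∂L/∂vⁱ_α) ∘ j¹φ] = (∂L/∂qⁱ) ∘ j¹φ` for all `i`. -/
def IsELSolution (L : Jet k n → ℝ) (φ : (Fin k → ℝ) → (Fin n → ℝ)) : Prop :=
  ContDiff ℝ (⊤ : ℕ∞) φ ∧
  ∀ (i : Fin n) (x : Fin k → ℝ),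
    (∑ α : Fin k, deriv (fun t => pdV L i α (j1 φ (Function.update x α t))) (x α))
      = pdQ L i (j1 φ x)

/-- `G = (G¹, …, Gᵏ)` is a conservation law for the Euler–Lagrange equations of `L`:
`∑_α ∂/∂xᵅ(Gᵅ ∘ j¹φ) = 0` for every solution `φ`. -/
def IsConservationLaw (L : Jet k n → ℝ) (G : Fin k → Jet k n → ℝ) : Prop :=
  ∀ φ : (Fin k → ℝ) → (Fin n → ℝ), IsELSolution L φ →
    ∀ x : Fin k → ℝ,
      (∑ α : Fin k, deriv (fun t => G α (j1 φ (Function.update x α t))) (x α)) = 0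

/-- The operator `T_α = ∂/∂xᵅ + vʲ_α ∂/∂qʲ + wʲ_{αβ} ∂/∂vʲ_β` at a point of the second
jet space (coordinates `(z, w)`), applied to a function `F` on the first jet space. -/
noncomputable def T2 (w : Fin n → Fin k → Fin k → ℝ) (α : Fin k)
    (F : Jet k n → ℝ) (z : Jet k n) : ℝ :=
  pdX F α z + (∑ j : Fin n, z.2.2 j α * pdQ F j z)
    + ∑ j : Fin n, ∑ β : Fin k, w j α β * pdV F j β z

def eX (α : Fin k) : Jet k n := (Pi.single α 1, 0, 0)
def eQ (i : Fin n) : Jet k n := (0, Pi.single i 1, 0)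
def eV (i : Fin n) (α : Fin k) : Jet k n := (0, 0, Pi.single i (Pi.single α 1))

lemma pdX_eq {F : Jet k n → ℝ} (hF : Differentiable ℝ F) (α : Fin k) (z : Jet k n) :
    pdX F α z = fderiv ℝ F z (eX α) := by
  have hc : HasDerivAt (fun t => ((Function.update z.1 α t, z.2.1, z.2.2) : Jet k n))
      (eX α) (z.1 α) :=
    (hasDerivAt_update z.1 α (z.1 α)).prodMk
      ((hasDerivAt_const _ _).prodMk (hasDerivAt_const _ _))
  have hz : ((Function.update z.1 α (z.1 α), z.2.1, z.2.2) : Jet k n) = z := by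
    simp
  have hd : HasDerivAt (fun t => F (Function.update z.1 α t, z.2.1, z.2.2))
      (fderiv ℝ F z (eX α)) (z.1 α) := by
    refine HasFDerivAt.comp_hasDerivAt _ ?_ hc
    rw [hz]; exact (hF z).hasFDerivAt
  exact hd.deriv

lemma pdQ_eq {F : Jet k n → ℝ} (hF : Differentiable ℝ F) (i : Fin n) (z : Jet k n) :
    pdQ F i z = fderiv ℝ F z (eQ i) := by
  have hc : HasDerivAt (fun t => ((z.1, Function.update z.2.1 i t, z.2.2) : Jet k n))
      (eQ i) (z.2.1 i) :=
    (hasDerivAt_const _ _).prodMk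
      ((hasDerivAt_update z.2.1 i (z.2.1 i)).prodMk (hasDerivAt_const _ _))
  have hd : HasDerivAt (fun t => F (z.1, Function.update z.2.1 i t, z.2.2))
      (fderiv ℝ F z (eQ i)) (z.2.1 i) := by
    refine HasFDerivAt.comp_hasDerivAt _ ?_ hc
    have hz : ((z.1, Function.update z.2.1 i (z.2.1 i), z.2.2) : Jet k n) = z := by simp
    rw [hz]; exact (hF z).hasFDerivAt
  exact hd.deriv

lemma pdV_eq {F : Jet k n → ℝ} (hF : Differentiable ℝ F) (i : Fin n) (α : Fin k)
    (z : Jet k n) : pdV F i α z = fderiv ℝ F z (eV i α) := by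
  have hinner : HasDerivAt (fun t => Function.update z.2.2 i (Function.update (z.2.2 i) α t))
      (Pi.single i (Pi.single α 1)) (z.2.2 i α) := by
    have h1 := hasDerivAt_update (z.2.2 i) α (z.2.2 i α)
    have h2 := hasFDerivAt_update (𝕜 := ℝ) (i := i) z.2.2
      (Function.update (z.2.2 i) α (z.2.2 i α))
    have h3 := h2.comp_hasDerivAt _ h1
    refine h3.congr_deriv ?_
    ext j
    rw [Pi.single_apply]
    simp [ContinuousLinearMap.pi_apply, Pi.single_apply]
    split_ifs with h
    · subst h; simp
    · simp [Pi.single_eq_of_ne h]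
  have hc : HasDerivAt (fun t => ((z.1, z.2.1,
      Function.update z.2.2 i (Function.update (z.2.2 i) α t)) : Jet k n))
      (eV i α) (z.2.2 i α) :=
    (hasDerivAt_const _ _).prodMk ((hasDerivAt_const _ _).prodMk hinner)
  have hd : HasDerivAt (fun t => F (z.1, z.2.1,
      Function.update z.2.2 i (Function.update (z.2.2 i) α t)))
      (fderiv ℝ F z (eV i α)) (z.2.2 i α) := by
    refine HasFDerivAt.comp_hasDerivAt _ ?_ hc
    have hz : ((z.1, z.2.1, Function.update z.2.2 i
        (Function.update (z.2.2 i) α (z.2.2 i α))) : Jet k n) = z := by simp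
    rw [hz]; exact (hF z).hasFDerivAt
  exact hd.deriv

lemma pdV_contDiff {L : Jet k n → ℝ} (hL : ContDiff ℝ (⊤ : ℕ∞) L) (i : Fin n) (α : Fin k) :
    ContDiff ℝ (⊤ : ℕ∞) (pdV L i α) := by
  have : pdV L i α = fun z => fderiv ℝ L z (eV i α) := by
    funext z; exact pdV_eq (hL.differentiable (by simp)) i α z
  rw [this]
  exact (hL.fderiv_right (by simp)).clm_apply contDiff_const

noncomputable def Vvec (z : Jet k n) (w : Fin n → Fin k → Fin k → ℝ) (α : Fin k) : Jet k n :=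
  eX α + (∑ j : Fin n, z.2.2 j α • eQ j) + ∑ j : Fin n, ∑ β : Fin k, w j α β • eV j β

lemma T2_eq {F : Jet k n → ℝ} (hF : Differentiable ℝ F)
    (w : Fin n → Fin k → Fin k → ℝ) (α : Fin k) (z : Jet k n) :
    T2 w α F z = fderiv ℝ F z (Vvec z w α) := by
  simp [T2, Vvec, pdX_eq hF, pdQ_eq hF, pdV_eq hF, map_add, map_sum, map_smul, smul_eq_mul]

/-- the coordinate identity
`d_{X⁽¹⁾}L = −(δL)ⱽ(X ∘ π₂₁) + d_{T⁽¹⁾_α}[(Θᵅ_L)ⱽ(X)]` on the second jet space. -/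
theorem statement8 (k n : ℕ) (hk : 1 ≤ k) (hn : 1 ≤ n)
    (L : Jet k n → ℝ) (hL : ContDiff ℝ (⊤ : ℕ∞) L)
    (X : Fin n → Jet k n → ℝ) (hX : ∀ i, ContDiff ℝ (⊤ : ℕ∞) (X i)) :
    ∀ (z : Jet k n) (w : Fin n → Fin k → Fin k → ℝ),
      (∑ i : Fin n, X i z * pdQ L i z)
      + (∑ i : Fin n, ∑ α : Fin k,
          (pdX (X i) α z + (∑ j : Fin n, z.2.2 j α * pdQ (X i) j z)
            + ∑ j : Fin n, ∑ β : Fin k, w j α β * pdV (X i) j β z) * pdV L i α z)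
      = - (∑ i : Fin n,
            ((∑ α : Fin k, T2 w α (pdV L i α) z) - pdQ L i z) * X i z)
        + ∑ α : Fin k, T2 w α (fun z' => ∑ i : Fin n, X i z' * pdV L i α z') z := by
  intro z w
  have hXd : ∀ i, Differentiable ℝ (X i) := fun i => (hX i).differentiable (by simp)
  have hP : ∀ (i : Fin n) (α : Fin k), Differentiable ℝ (pdV L i α) :=
    fun i α => (pdV_contDiff hL i α).differentiable (by simp)
  have key : ∀ α : Fin k, T2 w α (fun z' => ∑ i : Fin n, X i z' * pdV L i α z') z
      = ∑ i : Fin n, (X i z * T2 w α (pdV L i α) z + pdV L i α z * T2 w α (X i) z) := by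
    intro α
    have hdiff : Differentiable ℝ (fun z' => ∑ i : Fin n, X i z' * pdV L i α z') :=
      Differentiable.fun_sum fun i _ => (hXd i).mul (hP i α)
    rw [T2_eq hdiff, fderiv_fun_sum (A := fun i z' => X i z' * pdV L i α z')
        (fun i _ => ((hXd i) z).mul ((hP i α) z)),
      ContinuousLinearMap.sum_apply]
    refine Finset.sum_congr rfl fun i _ => ?_
    rw [fderiv_fun_mul ((hXd i) z) ((hP i α) z)]
    simp [T2_eq (hXd i) w α z, T2_eq (hP i α) w α z, smul_eq_mul]
  have hT : ∀ (i : Fin n) (α : Fin k), pdX (X i) α z + (∑ j : Fin n, z.2.2 j α * pdQ (X i) j z)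
      + ∑ j : Fin n, ∑ β : Fin k, w j α β * pdV (X i) j β z = T2 w α (X i) z := fun _ _ => rfl
  simp only [hT]
  rw [Finset.sum_congr rfl (fun α _ => key α)]
  conv_rhs => rw [Finset.sum_comm]
  rw [← Finset.sum_neg_distrib, ← Finset.sum_add_distrib, ← Finset.sum_add_distrib]
  refine Finset.sum_congr rfl fun i _ => ?_
  rw [Finset.sum_add_distrib, sub_mul, Finset.sum_mul]
  have h1 : ∑ α : Fin k, X i z * T2 w α (pdV L i α) z
      = ∑ α : Fin k, T2 w α (pdV L i α) z * X i z :=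
    Finset.sum_congr rfl fun _ _ => mul_comm _ _
  have h2 : ∑ α : Fin k, pdV L i α z * T2 w α (X i) z
      = ∑ α : Fin k, T2 w α (X i) z * pdV L i α z :=
    Finset.sum_congr rfl fun _ _ => mul_comm _ _
  rw [h1, h2]; ring
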